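/- Let a, b, c ∈ ℝ³ be mutually orthogonal vectors of equal positive magnitude with det(a, b, c) > 0, and suppose ψ, ψ' ∈ ℂ² are spinors both satisfying a + ib = ψᵗσψ, c = −ψ̂ᵗσψ and a + ib = ψ'ᵗσψ', c = −ψ̂'ᵗσψ'. Then ψ' = ψ or ψ' = −ψ (the spinor is determined up to sign). -/

import Mathlib

open Matrix Complex

/-- The first Cartan spinor matrix σ₁ = [[1,0],[0,−1]]. -/
noncomputable def sigma1 : Matrix (Fin 2) (Fin 2) ℂ := !![1, 0; 0, -1]

/-- The second Cartan spinor matrix σ₂ = [[i,0],[0,i]]. -/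
noncomputable def sigma2 : Matrix (Fin 2) (Fin 2) ℂ := !![Complex.I, 0; 0, Complex.I]

/-- The third Cartan spinor matrix σ₃ = [[0,−1],[−1,0]]. -/
noncomputable def sigma3 : Matrix (Fin 2) (Fin 2) ℂ := !![0, -1; -1, 0]

/-- For spinors φ, ψ ∈ ℂ², the vector φᵗσψ ∈ ℂ³ whose j-th component is φᵗσⱼψ. -/
noncomputable def spinorBilin (φ ψ : Fin 2 → ℂ) : Fin 3 → ℂ :=
  ![φ ⬝ᵥ sigma1.mulVec ψ, φ ⬝ᵥ sigma2.mulVec ψ, φ ⬝ᵥ sigma3.mulVec ψ]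

/-- The mate (conjugate) of a spinor ψ: ψ̂ = (−ψ̄₂, ψ̄₁). -/
noncomputable def mate (ψ : Fin 2 → ℂ) : Fin 2 → ℂ :=
  ![-(starRingEnd ℂ) (ψ 1), (starRingEnd ℂ) (ψ 0)]

/-- View a triple of reals as a vector in Euclidean 3-space. -/
noncomputable def toE3 (v : Fin 3 → ℝ) : EuclideanSpace ℝ (Fin 3) := WithLp.toLp 2 v


private lemma sb0' (ψ : Fin 2 → ℂ) : spinorBilin ψ ψ 0 = ψ 0 * ψ 0 - ψ 1 * ψ 1 := by
  simp [spinorBilin, sigma1, Matrix.mulVec, dotProduct, Fin.sum_univ_two]; ring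

private lemma sb1' (ψ : Fin 2 → ℂ) : spinorBilin ψ ψ 1 = Complex.I * (ψ 0 * ψ 0 + ψ 1 * ψ 1) := by
  simp [spinorBilin, sigma2, Matrix.mulVec, dotProduct, Fin.sum_univ_two]; ring

private lemma sb2' (ψ : Fin 2 → ℂ) : spinorBilin ψ ψ 2 = -(2 * ψ 0 * ψ 1) := by
  simp [spinorBilin, sigma3, Matrix.mulVec, dotProduct, Fin.sum_univ_two]; ring

/-- The spinor representing an orthogonal triad a, b, c of equal positive magnitude
with det(a,b,c) > 0 is determined up to sign. -/
theorem spinor_of_triad_unique_up_to_sign (a b c : Fin 3 → ℝ)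
    (hab : inner ℝ (toE3 a) (toE3 b) = (0 : ℝ))
    (hac : inner ℝ (toE3 a) (toE3 c) = (0 : ℝ))
    (hbc : inner ℝ (toE3 b) (toE3 c) = (0 : ℝ))
    (habn : ‖toE3 a‖ = ‖toE3 b‖) (hbcn : ‖toE3 b‖ = ‖toE3 c‖)
    (hpos : 0 < ‖toE3 a‖)
    (hdet : 0 < (Matrix.of ![a, b, c]).det)
    (ψ ψ' : Fin 2 → ℂ)
    (hψ1 : ∀ j, (a j : ℂ) + Complex.I * (b j : ℂ) = spinorBilin ψ ψ j)
    (hψ2 : ∀ j, (c j : ℂ) = -(spinorBilin (mate ψ) ψ j))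
    (hψ'1 : ∀ j, (a j : ℂ) + Complex.I * (b j : ℂ) = spinorBilin ψ' ψ' j)
    (hψ'2 : ∀ j, (c j : ℂ) = -(spinorBilin (mate ψ') ψ' j)) :
    ψ' = ψ ∨ ψ' = -ψ := by
  have key : ∀ j, spinorBilin ψ' ψ' j = spinorBilin ψ ψ j :=
    fun j => (hψ'1 j).symm.trans (hψ1 j)
  have e0 := key 0; rw [sb0', sb0'] at e0
  have e1 := key 1; rw [sb1', sb1'] at e1
  have e2 := key 2; rw [sb2', sb2'] at e2
  have hIne : (Complex.I : ℂ) ≠ 0 := Complex.I_ne_zero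
  have e1' : ψ' 0 * ψ' 0 + ψ' 1 * ψ' 1 = ψ 0 * ψ 0 + ψ 1 * ψ 1 :=
    mul_left_cancel₀ hIne e1
  have h0sq : ψ' 0 * ψ' 0 = ψ 0 * ψ 0 := by linear_combination (e0 + e1') / 2
  have h1sq : ψ' 1 * ψ' 1 = ψ 1 * ψ 1 := by linear_combination (e1' - e0) / 2
  have hprod : ψ' 0 * ψ' 1 = ψ 0 * ψ 1 := by linear_combination -e2 / 2
  have hψne : ¬ (ψ 0 = 0 ∧ ψ 1 = 0) := by
    rintro ⟨h0, h1⟩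
    have ha : ∀ j, a j = 0 := by
      intro j
      have := hψ1 j
      fin_cases j <;>
        simp_all [sb0', sb1', sb2', Complex.ext_iff]
    have : toE3 a = 0 := by ext j; exact ha j
    rw [this] at hpos; simp at hpos
  by_cases h0 : ψ 0 = 0
  · have h1 : ψ 1 ≠ 0 := fun h => hψne ⟨h0, h⟩
    have h0' : ψ' 0 = 0 := by
      have : ψ' 0 * ψ' 0 = 0 := by rw [h0sq, h0]; ring
      exact (mul_self_eq_zero).1 this
    rcases mul_self_eq_mul_self_iff.1 h1sq with h | h
    · left; funext j; fin_cases j <;> simp [h0', h0, h]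
    · right; funext j; fin_cases j <;> simp [h0', h0, h]
  · rcases mul_self_eq_mul_self_iff.1 h0sq with h | h
    · left; funext j
      have h1' : ψ' 1 = ψ 1 := by
        have : ψ 0 * ψ' 1 = ψ 0 * ψ 1 := by linear_combination hprod - ψ' 1 * h
        exact mul_left_cancel₀ h0 this
      fin_cases j <;> simp [h, h1']
    · right; funext j
      have h1' : ψ' 1 = -ψ 1 := by
        have : ψ 0 * ψ' 1 = ψ 0 * (-ψ 1) := by linear_combination -hprod + ψ' 1 * h
        exact mul_left_cancel₀ h0 this
      fin_cases j <;> simp [h, h1']
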